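/- Let g : [0,1] → ℝ be defined by g(q) = min over (w₁,w₂) ∈ ℝ² of q·(p + (1-p)(1-w₁)²) + (1-q)·((1-p)(1-w₁-w₂)² + p(1-w₂)²), for fixed p ∈ (0,1). Then g is monotone nondecreasing on [0,1] and g(1) = p. -/

import Mathlib

lemma inf_eq (p : ℝ) (hp0 : 0 < p) (hp1 : p < 1) (q : ℝ) (hq0 : 0 ≤ q) (hq1 : q ≤ 1) :
    sInf ((fun w : ℝ × ℝ =>
        q * (p + (1 - p) * (1 - w.1)^2) +
          (1 - q) * ((1 - p) * (1 - w.1 - w.2)^2 + p * (1 - w.2)^2)) '' Set.univ)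
      = p * q / (p + q * (1 - p)) := by
  have hD : 0 < p + q * (1 - p) := by nlinarith
  apply IsLeast.csInf_eq
  constructor
  · refine ⟨(1 - (1-q)*p/(p+q*(1-p)), 1 - q*(1-p)/(p+q*(1-p))), Set.mem_univ _, ?_⟩
    field_simp
    ring
  · rintro y ⟨w, -, rfl⟩
    dsimp only
    rw [div_le_iff₀ hD]
    nlinarith [mul_nonneg (mul_nonneg (by linarith : (0:ℝ) ≤ 1-q) hD.le)
        (sq_nonneg ((1 - w.2) - (1-p)*w.1)),
      mul_nonneg (by linarith : (0:ℝ) ≤ 1-p)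
        (sq_nonneg ((p+q*(1-p))*(1-w.1) - (1-q)*p))]

theorem stmt_12 (p : ℝ) (hp : p ∈ Set.Ioo (0:ℝ) 1) :
    MonotoneOn (fun q : ℝ => sInf ((fun w : ℝ × ℝ =>
        q * (p + (1 - p) * (1 - w.1)^2) +
          (1 - q) * ((1 - p) * (1 - w.1 - w.2)^2 + p * (1 - w.2)^2)) '' Set.univ))
      (Set.Icc 0 1) ∧
    sInf ((fun w : ℝ × ℝ =>
        (1:ℝ) * (p + (1 - p) * (1 - w.1)^2) +
          (1 - 1) * ((1 - p) * (1 - w.1 - w.2)^2 + p * (1 - w.2)^2)) '' Set.univ) = p := by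
  obtain ⟨hp0, hp1⟩ := hp
  constructor
  · intro a ha b hb hab
    dsimp only
    rw [inf_eq p hp0 hp1 a ha.1 ha.2, inf_eq p hp0 hp1 b hb.1 hb.2]
    have hDa : 0 < p + a * (1 - p) := by nlinarith [ha.1, ha.2]
    have hDb : 0 < p + b * (1 - p) := by nlinarith [hb.1, hb.2]
    rw [div_le_div_iff₀ hDa hDb]
    nlinarith [mul_le_mul_of_nonneg_left hab (mul_pos hp0 hp0).le]
  · rw [inf_eq p hp0 hp1 1 zero_le_one le_rfl]
    field_simp
    ring
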